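/- Let E be a Riesz space and let p, q : ℕ → ℕ satisfy the deferred property. The deferred statistical order limit is uniquely determined: if x_n →^{D_{st_o}}_{p,q} x and x_n →^{D_{st_o}}_{p,q} y for the same sequence (x_n) in E, then x = y. -/

import Mathlib

open Filter Topology

variable {E : Type*} [AddCommGroup E] [Lattice E]
  [CovariantClass E E (· + ·) (· ≤ ·)] [Module ℝ E] [PosSMulMono ℝ E]

/-- `p` and `q` satisfy the deferred property: `p n < q n` for all `n` and `q n → ∞`. -/
def DeferredProperty (p q : ℕ → ℕ) : Prop :=
  (∀ n, p n < q n) ∧ Tendsto q atTop atTop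

open Classical in
/-- The ratio `|{k ∈ K : p n < k ≤ q n}| / (q n - p n)`. -/
noncomputable def deferredRatio (p q : ℕ → ℕ) (K : Set ℕ) (n : ℕ) : ℝ :=
  (((Finset.Ioc (p n) (q n)).filter (fun k => k ∈ K)).card : ℝ) / ((q n : ℝ) - (p n : ℝ))

/-- The deferred density of `K ⊆ ℕ` is `a`. -/
def DeferredDensity (p q : ℕ → ℕ) (K : Set ℕ) (a : ℝ) : Prop :=
  Tendsto (deferredRatio p q K) atTop (nhds a)

/-- `z` is deferred statistical order decreasing to `0`: there is an (infinite) set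
`K = {k₁ < k₂ < ⋯}` of deferred density one along which `z` is decreasing with infimum `0`. -/
def DStatDecreasing (p q : ℕ → ℕ) (z : ℕ → E) : Prop :=
  ∃ K : Set ℕ, K.Infinite ∧ DeferredDensity p q K 1 ∧
    (∀ i ∈ K, ∀ j ∈ K, i ≤ j → z j ≤ z i) ∧ IsGLB (z '' K) 0

/-- `x` is deferred statistical order convergent to `l`. -/
def DStatOrderConv (p q : ℕ → ℕ) (x : ℕ → E) (l : E) : Prop :=
  ∃ z : ℕ → E, DStatDecreasing p q z ∧
    ∃ K : Set ℕ, K.Infinite ∧ DeferredDensity p q K 1 ∧ ∀ k ∈ K, |x k - l| ≤ z k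

open Classical in
lemma aux_ratio_nonneg (p q : ℕ → ℕ) (h : ∀ n, p n < q n) (K : Set ℕ) (n : ℕ) :
    0 ≤ deferredRatio p q K n := by
  unfold deferredRatio
  apply div_nonneg (by positivity)
  have : (p n : ℝ) < q n := by exact_mod_cast h n
  linarith

open Classical in
lemma aux_density_inter (p q : ℕ → ℕ) (hpq : DeferredProperty p q) {K K' : Set ℕ}
    (h : DeferredDensity p q K 1) (h' : DeferredDensity p q K' 1) :
    DeferredDensity p q (K ∩ K') 1 := by
  have hd : ∀ n, (0:ℝ) < (q n : ℝ) - (p n : ℝ) := by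
    intro n
    have : (p n : ℝ) < q n := by exact_mod_cast hpq.1 n
    linarith
  unfold DeferredDensity at *
  apply tendsto_of_tendsto_of_tendsto_of_le_of_le
    (g := fun n => deferredRatio p q K n + deferredRatio p q K' n - 1)
    (h := deferredRatio p q K)
  · have := (h.add h').sub (tendsto_const_nhds (x := (1:ℝ)))
    simpa using this
  · exact h
  · intro n
    show deferredRatio p q K n + deferredRatio p q K' n - 1 ≤ _
    unfold deferredRatio
    have hcard : ((Finset.Ioc (p n) (q n)).filter (fun k => k ∈ K)).card
        + ((Finset.Ioc (p n) (q n)).filter (fun k => k ∈ K')).card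
        ≤ ((Finset.Ioc (p n) (q n)).filter (fun k => k ∈ K ∩ K')).card + (q n - p n) := by
      have h1 : ((Finset.Ioc (p n) (q n)).filter (fun k => k ∈ K))
          ∩ ((Finset.Ioc (p n) (q n)).filter (fun k => k ∈ K'))
          = (Finset.Ioc (p n) (q n)).filter (fun k => k ∈ K ∩ K') := by
        ext k; simp [Finset.mem_filter]; tauto
      have h2 := Finset.card_union_add_card_inter
        ((Finset.Ioc (p n) (q n)).filter (fun k => k ∈ K))
        ((Finset.Ioc (p n) (q n)).filter (fun k => k ∈ K'))
      have hsub : ((Finset.Ioc (p n) (q n)).filter (fun k => k ∈ K))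
          ∪ ((Finset.Ioc (p n) (q n)).filter (fun k => k ∈ K')) ⊆ Finset.Ioc (p n) (q n) := by
        intro k hk
        rcases Finset.mem_union.mp hk with h | h <;> exact (Finset.mem_filter.mp h).1
      have h3 := Finset.card_le_card hsub
      rw [Nat.card_Ioc] at h3
      rw [h1] at h2
      omega
    have hkey : (((Finset.Ioc (p n) (q n)).filter (fun k => k ∈ K)).card : ℝ)
        + ((Finset.Ioc (p n) (q n)).filter (fun k => k ∈ K')).card
        ≤ (((Finset.Ioc (p n) (q n)).filter (fun k => k ∈ K ∩ K')).card : ℝ)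
          + ((q n : ℝ) - (p n : ℝ)) := by
      rw [show ((q n : ℝ) - (p n : ℝ)) = ((q n - p n : ℕ) : ℝ) from
        (Nat.cast_sub (hpq.1 n).le).symm]
      exact_mod_cast hcard
    rw [← add_div, div_sub_one (hd n).ne']
    refine (div_le_div_iff_of_pos_right (hd n)).mpr ?_
    have efix : (Finset.Ioc (p n) (q n)).filter (fun k => k ∈ K ∩ K')
        = (@Finset.filter ℕ (fun k => k ∈ K ∩ K')
            (fun a => Classical.propDecidable _) (Finset.Ioc (p n) (q n))) := by
      ext k
      simp [Finset.mem_filter]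
    rw [efix] at hkey
    linarith
  · intro n
    unfold deferredRatio
    apply (div_le_div_iff_of_pos_right (hd n)).mpr
    exact Nat.cast_le.mpr (Finset.card_le_card (by
      intro k hk
      simp only [Finset.mem_filter, Set.mem_inter_iff] at hk ⊢
      tauto))

open Classical in
lemma aux_infinite_of_density_one (p q : ℕ → ℕ) (hpq : DeferredProperty p q) {K : Set ℕ}
    (h : DeferredDensity p q K 1) : K.Infinite := by
  by_contra hfin
  rw [Set.not_infinite] at hfin
  set M : ℕ := hfin.toFinset.sup id with hM
  have hbound : ∀ k ∈ K, k ≤ M := by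
    intro k hk
    exact Finset.le_sup (f := id) (hfin.mem_toFinset.2 hk)
  have hzero : Tendsto (deferredRatio p q K) atTop (nhds 0) := by
    apply squeeze_zero' (Eventually.of_forall (aux_ratio_nonneg p q hpq.1 K))
      (g := fun n => (hfin.toFinset.card : ℝ) / ((q n : ℝ) - M))
    · filter_upwards [hpq.2.eventually_gt_atTop M] with n hn
      unfold deferredRatio
      by_cases hc : ((Finset.Ioc (p n) (q n)).filter (fun k => k ∈ K)).card = 0
      · rw [hc]
        simp only [Nat.cast_zero, zero_div]
        apply div_nonneg (by positivity)
        have : (M : ℝ) < q n := by exact_mod_cast hn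
        linarith
      · obtain ⟨k, hk⟩ := Finset.card_pos.mp (Nat.pos_of_ne_zero hc)
        simp only [Finset.mem_filter, Finset.mem_Ioc] at hk
        have hpM : p n < M := lt_of_lt_of_le hk.1.1 (hbound k hk.2)
        have h1 : (0:ℝ) < (q n : ℝ) - M := by
          have : (M : ℝ) < q n := by exact_mod_cast hn
          linarith
        apply div_le_div₀ ?_ ?_ h1 ?_
        · positivity
        · exact Nat.cast_le.mpr (Finset.card_le_card (by
            intro k hk
            simp only [Finset.mem_filter] at hk
            exact hfin.mem_toFinset.2 hk.2))
        · have : (p n : ℝ) ≤ M := by exact_mod_cast hpM.le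
          linarith
    · apply Tendsto.div_atTop tendsto_const_nhds
      apply tendsto_atTop_add_const_right
      exact tendsto_natCast_atTop_atTop.comp hpq.2
  have := tendsto_nhds_unique h hzero
  norm_num at this

set_option maxHeartbeats 1000000 in
theorem stmt5 (p q : ℕ → ℕ) (hpq : DeferredProperty p q) (x : ℕ → E) (a b : E)
    (ha : DStatOrderConv p q x a) (hb : DStatOrderConv p q x b) : a = b := by
  obtain ⟨z, ⟨Kz, hKzInf, hKzD, hzMono, hzGLB⟩, Ka, hKaInf, hKaD, hax⟩ := ha
  obtain ⟨w, ⟨Kw, hKwInf, hKwD, hwMono, hwGLB⟩, Kb, hKbInf, hKbD, hbx⟩ := hb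
  set K : Set ℕ := Kz ∩ Kw ∩ Ka ∩ Kb with hK
  have hKD : DeferredDensity p q K 1 :=
    aux_density_inter p q hpq (aux_density_inter p q hpq
      (aux_density_inter p q hpq hKzD hKwD) hKaD) hKbD
  have hKInf : K.Infinite := aux_infinite_of_density_one p q hpq hKD
  have key : ∀ i ∈ Kz, ∀ j ∈ Kw, |a - b| ≤ z i + w j := by
    intro i hi j hj
    obtain ⟨k, hkK, hk⟩ := hKInf.exists_gt (max i j)
    have hkz : k ∈ Kz := hkK.1.1.1
    have hkw : k ∈ Kw := hkK.1.1.2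
    have hka : k ∈ Ka := hkK.1.2
    have hkb : k ∈ Kb := hkK.2
    have h1 : |a - b| ≤ |x k - a| + |x k - b| := by
      have : a - b = (a - x k) + (x k - b) := by abel
      rw [this]
      calc |(a - x k) + (x k - b)| ≤ |a - x k| + |x k - b| := abs_add_le _ _
        _ = |x k - a| + |x k - b| := by rw [abs_sub_comm]
    have h2 : z k ≤ z i := hzMono i hi k hkz (le_of_lt (lt_of_le_of_lt (le_max_left i j) hk))
    have h3 : w k ≤ w j := hwMono j hj k hkw (le_of_lt (lt_of_le_of_lt (le_max_right i j) hk))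
    calc |a - b| ≤ |x k - a| + |x k - b| := h1
      _ ≤ z k + w k := add_le_add (hax k hka) (hbx k hkb)
      _ ≤ z i + w j := add_le_add h2 h3
  have step1 : ∀ j ∈ Kw, |a - b| ≤ w j := by
    intro j hj
    have hlb : |a - b| - w j ∈ lowerBounds (z '' Kz) := by
      rintro _ ⟨i, hi, rfl⟩
      exact sub_le_iff_le_add.mpr (key i hi j hj)
    have h0 := hzGLB.2 hlb
    exact sub_nonpos.mp h0
  have hlb2 : |a - b| ∈ lowerBounds (w '' Kw) := by
    rintro _ ⟨j, hj, rfl⟩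
    exact step1 j hj
  have habs : |a - b| ≤ 0 := hwGLB.2 hlb2
  have habs0 : |a - b| = 0 := le_antisymm habs (abs_nonneg _)
  have h1 : a - b ≤ 0 := habs0 ▸ le_abs_self _
  have h2 : 0 ≤ a - b := by
    have hneg : -(a - b) ≤ 0 := habs0 ▸ neg_le_abs (a - b)
    simpa using neg_nonpos.mp hneg
  exact sub_eq_zero.mp (le_antisymm h1 h2)
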